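/- If A is a coin sequence containing at least one heads-up coin and A^R is the reversal of A, then S(A) ≡ 2 (mod 3) if and only if S(A^R) ≡ 2 (mod 3). -/
import Mathlib


/-- Signed sum of the `true` entries of a list, the sign toggling at each `false`. -/
def signedSum : ℤ → List Bool → ℤ
  | _, [] => 0
  | s, (true :: l) => s + signedSum s l
  | s, (false :: l) => signedSum (-s) l

/-- The parity sum `S(A) = h₀ + ∑_{i=1}^n (-1)^{pᵢ} hᵢ - pₙ`, where
`A = 1^{h₀} 0^{t₁} 1^{h₁} ⋯ 0^{tₙ} 1^{hₙ}` and `pᵢ ≡ t₁ + ⋯ + tᵢ (mod 2)`. -/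
def pS (A : List Bool) : ℤ :=
  signedSum 1 A - ((A.count false % 2 : ℕ) : ℤ)

lemma signedSum_append_single (l : List Bool) : ∀ (s : ℤ) (b : Bool),
    signedSum s (l ++ [b]) =
      signedSum s l + if b then s * (-1) ^ (l.count false) else 0 := by
  induction l with
  | nil => intro s b; cases b <;> simp [signedSum]
  | cons a t ih =>
    intro s b
    cases a <;> cases b <;>
      simp [signedSum, ih, List.count_cons, pow_succ] <;> ring

lemma signedSum_smul (l : List Bool) : ∀ s : ℤ, signedSum s l = s * signedSum 1 l := by
  induction l with
  | nil => intro s; simp [signedSum]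
  | cons a t ih =>
    intro s
    cases a <;> simp [signedSum, ih s, ih (-s), ih (-1)] <;> ring

lemma signedSum_reverse (l : List Bool) :
    signedSum 1 l.reverse = (-1) ^ (l.count false) * signedSum 1 l := by
  induction l with
  | nil => simp [signedSum]
  | cons a t ih =>
    cases a <;>
      simp [signedSum, List.reverse_cons, signedSum_append_single, ih,
        List.count_cons, pow_succ, signedSum_smul t (-1)] <;> ring

theorem pS_reverse_mod_three (A : List Bool) (hA : true ∈ A) :
    pS A % 3 = 2 ↔ pS A.reverse % 3 = 2 := by
  unfold pS
  rw [List.count_reverse, signedSum_reverse]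
  set S := signedSum 1 A with hS
  set c := A.count false with hc
  rcases Nat.even_or_odd c with he | ho
  · rw [he.neg_one_pow, Nat.even_iff.mp he]; simp
  · rw [ho.neg_one_pow, Nat.odd_iff.mp ho]
    push_cast
    omega
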